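/- arXiv:1311.1459 — 2 statements merged into one kernel-verified Lean document; each statement's English description precedes it below -/
import Mathlib

section
/- Let p₁ > 0, q ≥ 2 an even integer, c > 0, a ≠ 0, and let D = {v ∈ ℝ³ : v₁ > 0, v₃ > 0, v₁^{q-1} v₃ > c v₂^q}. Then for all α, β ≥ 0 with β + (α+1)/q ≤ 2, the integral ∫_D v₁^{p₁} |v₂/v₁|^α |v₃/v₁|^β e^{-v₁²/2} e^{-|a| v₃} dv is finite. -/
open Real MeasureTheory Set

private lemma aux_habs {q : ℕ} (hq : 2 ≤ q) (hq_even : Even q) {c : ℝ} (hc : 0 < c)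
    {x z y : ℝ} (h : c * y ^ q < x ^ (q - 1) * z) :
    |y| < ((x ^ (q - 1) * z) / c) ^ ((q : ℝ)⁻¹) := by
  have hq0 : (0:ℝ) < q := by positivity
  have h1 : |y| ^ q < (x ^ (q - 1) * z) / c := by
    rw [lt_div_iff₀ hc, hq_even.pow_abs]
    linarith
  calc |y| = (|y| ^ q) ^ ((q : ℝ)⁻¹) := by
        rw [← Real.rpow_natCast |y| q, ← Real.rpow_mul (abs_nonneg y),
          mul_inv_cancel₀ (ne_of_gt hq0), Real.rpow_one]
    _ < ((x ^ (q - 1) * z) / c) ^ ((q : ℝ)⁻¹) :=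
        Real.rpow_lt_rpow (by positivity) h1 (by positivity)

private lemma aux_integrable_G
    (p₁ : ℝ) (hp₁ : 0 < p₁) (q : ℕ) (hq : 2 ≤ q) (hq_even : Even q)
    (c A : ℝ) (hc : 0 < c) (hA : 0 < A)
    (α β : ℝ) (hα : 0 ≤ α) (hβ : 0 ≤ β) (hαβ : β + (α + 1) / q ≤ 2) :
    Integrable (Set.indicator
      {p : ℝ × ℝ × ℝ | 0 < p.2.1 ∧ 0 < p.2.2 ∧ c * p.1 ^ q < p.2.1 ^ (q - 1) * p.2.2}
      (fun p : ℝ × ℝ × ℝ =>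
        p.2.1 ^ p₁ * |p.1 / p.2.1| ^ α * |p.2.2 / p.2.1| ^ β *
          Real.exp (-(p.2.1) ^ 2 / 2) * Real.exp (-A * p.2.2))) volume := by
  have hq0 : (0:ℝ) < q := by positivity
  set u : ℝ := (α + 1) / q with hu_def
  have hu0 : 0 < u := by positivity
  have huq : u * q = α + 1 := by rw [hu_def]; field_simp
  set s : ℝ := p₁ - α - β + ((q:ℝ) - 1) * u with hs_def
  have hs : -1 < s := by
    have h1 : ((q:ℝ) - 1) * u = (α + 1) - u := by nlinarith
    rw [hs_def, h1]; linarith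
  set t : ℝ := β + u with ht_def
  have ht : -1 < t := by rw [ht_def]; linarith
  -- abbreviations
  set S : Set (ℝ × ℝ × ℝ) :=
    {p : ℝ × ℝ × ℝ | 0 < p.2.1 ∧ 0 < p.2.2 ∧ c * p.1 ^ q < p.2.1 ^ (q - 1) * p.2.2} with hS_def
  set g : ℝ × ℝ × ℝ → ℝ := fun p =>
    p.2.1 ^ p₁ * |p.1 / p.2.1| ^ α * |p.2.2 / p.2.1| ^ β *
      Real.exp (-(p.2.1) ^ 2 / 2) * Real.exp (-A * p.2.2) with hg_def
  set R : ℝ → ℝ → ℝ := fun x z => ((x ^ (q - 1) * z) / c) ^ ((q:ℝ)⁻¹) with hR_def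
  set Cst : ℝ → ℝ → ℝ := fun x z =>
    x ^ p₁ * x ^ (-α) * x ^ (-β) * z ^ β * Real.exp (-x ^ 2 / 2) * Real.exp (-A * z) *
      R x z ^ α with hC_def
  set f₁ : ℝ → ℝ := fun x => x ^ s * Real.exp (-x ^ 2 / 2) with hf₁_def
  set f₂ : ℝ → ℝ := fun z => (2 * c ^ (-u)) * (z ^ t * Real.exp (-A * z)) with hf₂_def
  have hSm : MeasurableSet S := by
    rw [hS_def]
    simp only [Set.setOf_and]
    exact ((measurableSet_lt measurable_const measurable_snd.fst).inter
      ((measurableSet_lt measurable_const measurable_snd.snd).inter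
        (measurableSet_lt (by fun_prop) (by fun_prop))))
  have hgm : Measurable g := by
    rw [hg_def]; fun_prop
  have hGm : Measurable (S.indicator g) := hgm.indicator hSm
  have hGsm : StronglyMeasurable (S.indicator g) := hGm.stronglyMeasurable
  have hR0 : ∀ x z : ℝ, 0 < x → 0 < z → 0 < R x z := fun x z hx hz =>
    Real.rpow_pos_of_pos (by positivity) _
  have hC0 : ∀ x z : ℝ, 0 < x → 0 < z → 0 ≤ Cst x z := by
    intro x z hx hz
    have := hR0 x z hx hz
    rw [hC_def]; positivity
  -- pointwise bound in y
  have hbound : ∀ (y x z : ℝ), 0 < x → 0 < z →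
      ‖S.indicator g (y, x, z)‖ ≤
        (Ioo (-(R x z)) (R x z)).indicator (fun _ => Cst x z) y := by
    intro y x z hx hz
    have hRy := hR0 x z hx hz
    by_cases hyS : (y, x, z) ∈ S
    · have hy : |y| < R x z := aux_habs hq hq_even hc hyS.2.2
      obtain ⟨hy1, hy2⟩ := abs_lt.1 hy
      rw [Set.indicator_of_mem hyS, Set.indicator_of_mem (mem_Ioo.2 ⟨hy1, hy2⟩)]
      have hgval : g (y, x, z) =
          x ^ p₁ * |y / x| ^ α * |z / x| ^ β * Real.exp (-x ^ 2 / 2) *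
            Real.exp (-A * z) := rfl
      rw [Real.norm_eq_abs, hgval, abs_of_nonneg (by positivity)]
      have h1 : |y / x| ^ α ≤ (R x z / x) ^ α := by
        apply Real.rpow_le_rpow (abs_nonneg _) _ hα
        rw [abs_div, abs_of_pos hx]
        gcongr
        try exact hy.le
      have h2 : (R x z / x) ^ α = R x z ^ α * x ^ (-α) := by
        rw [Real.div_rpow hRy.le hx.le, Real.rpow_neg hx.le, div_eq_mul_inv]
      have h3 : |z / x| ^ β = z ^ β * x ^ (-β) := by
        rw [abs_of_pos (div_pos hz hx), Real.div_rpow hz.le hx.le,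
          Real.rpow_neg hx.le, div_eq_mul_inv]
      calc x ^ p₁ * |y / x| ^ α * |z / x| ^ β * Real.exp (-x ^ 2 / 2) * Real.exp (-A * z)
          ≤ x ^ p₁ * (R x z / x) ^ α * |z / x| ^ β * Real.exp (-x ^ 2 / 2) *
              Real.exp (-A * z) := by
            gcongr
            try exact abs_nonneg _
        _ = Cst x z := by rw [h2, h3, hC_def]; ring
    · rw [Set.indicator_of_notMem hyS, norm_zero]
      exact Set.indicator_nonneg (fun _ _ => hC0 x z hx hz) y
  have hIoo_int : ∀ x z : ℝ,
      Integrable ((Ioo (-(R x z)) (R x z)).indicator (fun _ => Cst x z)) volume :=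
    fun x z => (integrable_indicator_iff measurableSet_Ioo).2
      (integrableOn_const measure_Ioo_lt_top.ne)
  have hInt1 : ∀ p : ℝ × ℝ, Integrable (fun y => S.indicator g (y, p)) volume := by
    rintro ⟨x, z⟩
    by_cases hxz : 0 < x ∧ 0 < z
    · exact Integrable.mono' (hIoo_int x z)
        ((hGm.comp (measurable_id.prodMk measurable_const)).aestronglyMeasurable)
        (Filter.Eventually.of_forall fun y => hbound y x z hxz.1 hxz.2)
    · have hz0 : ∀ y : ℝ, S.indicator g (y, x, z) = 0 := fun y =>
        Set.indicator_of_notMem (fun hmem => hxz ⟨hmem.1, hmem.2.1⟩) _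
      simp only [hz0]
      exact integrable_zero _ _ _
  -- the key algebraic identity
  have halg : ∀ x z : ℝ, 0 < x → 0 < z → Cst x z * (2 * R x z) = f₁ x * f₂ z := by
    intro x z hx hz
    have hRy := hR0 x z hx hz
    have hM : (0:ℝ) < x ^ (q - 1) * z := by positivity
    have hMc : (0:ℝ) < x ^ (q - 1) * z / c := by positivity
    have h1 : R x z ^ α * R x z = x ^ (((q:ℝ) - 1) * u) * (z ^ u * c ^ (-u)) := by
      have e1 : R x z ^ α * R x z = R x z ^ (α + 1) := by
        rw [Real.rpow_add hRy, Real.rpow_one]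
      rw [e1]
      simp only [hR_def]
      rw [← Real.rpow_mul hMc.le]
      rw [show (q:ℝ)⁻¹ * (α + 1) = u from by rw [hu_def]; ring]
      rw [Real.div_rpow hM.le hc.le, Real.mul_rpow (pow_nonneg hx.le _) hz.le,
        ← Real.rpow_natCast x (q - 1), ← Real.rpow_mul hx.le,
        Nat.cast_sub (by omega : 1 ≤ q), Nat.cast_one, Real.rpow_neg hc.le]
      ring
    have h2 : x ^ p₁ * x ^ (-α) * x ^ (-β) * x ^ (((q:ℝ) - 1) * u) = x ^ s := by
      rw [← Real.rpow_add hx, ← Real.rpow_add hx, ← Real.rpow_add hx, hs_def]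
      congr 1 <;> try ring
    have h3 : z ^ β * z ^ u = z ^ t := by rw [← Real.rpow_add hz, ht_def]
    simp only [hC_def, hf₁_def, hf₂_def]
    linear_combination
      (x ^ p₁ * x ^ (-α) * x ^ (-β) * z ^ β * Real.exp (-x ^ 2 / 2) *
        Real.exp (-A * z) * 2) * h1 +
      (z ^ u * c ^ (-u) * Real.exp (-x ^ 2 / 2) * Real.exp (-A * z) * 2 * z ^ β) * h2 +
      (x ^ s * c ^ (-u) * Real.exp (-x ^ 2 / 2) * Real.exp (-A * z) * 2) * h3
  -- integrability of the two 1D pieces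
  have hf₁int : IntegrableOn f₁ (Ioi 0) volume := by
    have h := integrableOn_rpow_mul_exp_neg_mul_sq (by norm_num : (0:ℝ) < 2⁻¹) hs
    refine h.congr_fun (fun x _ => ?_) measurableSet_Ioi
    rw [hf₁_def]
    ring_nf
  have hf₂int : IntegrableOn f₂ (Ioi 0) volume := by
    have h := integrableOn_rpow_mul_exp_neg_mul_rpow ht zero_lt_one hA
    simp only [Real.rpow_one] at h
    rw [hf₂_def]
    exact h.const_mul _
  have hΦ : Integrable (fun p : ℝ × ℝ =>
      (Ioi (0:ℝ)).indicator f₁ p.1 * (Ioi (0:ℝ)).indicator f₂ p.2)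
      (volume : Measure (ℝ × ℝ)) := by
    rw [Measure.volume_eq_prod]
    exact Integrable.mul_prod ((integrable_indicator_iff measurableSet_Ioi).2 hf₁int)
      ((integrable_indicator_iff measurableSet_Ioi).2 hf₂int)
  have hOuter : Integrable (fun p : ℝ × ℝ => ∫ y, ‖S.indicator g (y, p)‖)
      (volume : Measure (ℝ × ℝ)) := by
    refine Integrable.mono' hΦ (hGsm.norm.integral_prod_left').aestronglyMeasurable
      (Filter.Eventually.of_forall ?_)
    rintro ⟨x, z⟩
    rw [Real.norm_eq_abs, abs_of_nonneg (integral_nonneg fun y => norm_nonneg _)]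
    by_cases hxz : 0 < x ∧ 0 < z
    · obtain ⟨hx, hz⟩ := hxz
      have hRy := hR0 x z hx hz
      calc ∫ y, ‖S.indicator g (y, x, z)‖
          ≤ ∫ y, (Ioo (-(R x z)) (R x z)).indicator (fun _ => Cst x z) y :=
            integral_mono_of_nonneg (Filter.Eventually.of_forall fun y => norm_nonneg _)
              (hIoo_int x z) (Filter.Eventually.of_forall fun y => hbound y x z hx hz)
        _ = (volume (Ioo (-(R x z)) (R x z))).toReal • Cst x z :=
            integral_indicator_const _ measurableSet_Ioo
        _ = Cst x z * (2 * R x z) := by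
            rw [Real.volume_Ioo, ENNReal.toReal_ofReal (by linarith), smul_eq_mul]
            ring
        _ = f₁ x * f₂ z := halg x z hx hz
        _ = (Ioi (0:ℝ)).indicator f₁ x * (Ioi (0:ℝ)).indicator f₂ z := by
            rw [Set.indicator_of_mem (mem_Ioi.2 hx), Set.indicator_of_mem (mem_Ioi.2 hz)]
    · have hz0 : ∀ y : ℝ, S.indicator g (y, x, z) = 0 := fun y =>
        Set.indicator_of_notMem (fun hmem => hxz ⟨hmem.1, hmem.2.1⟩) _
      simp only [hz0, norm_zero, integral_zero]
      refine mul_nonneg (Set.indicator_nonneg (fun a ha => ?_) x)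
        (Set.indicator_nonneg (fun a ha => ?_) z)
      · have ha' : (0:ℝ) < a := ha
        rw [hf₁_def]; positivity
      · have ha' : (0:ℝ) < a := ha
        rw [hf₂_def]; positivity
  rw [Measure.volume_eq_prod]
  exact (integrable_prod_iff' hGsm.aestronglyMeasurable).2
    ⟨Filter.Eventually.of_forall fun p => hInt1 p, hOuter⟩

/-- With `p₁ > 0`, `q ≥ 2` even, `c > 0`, `A = |a| > 0`, and
`D = {v ∈ ℝ³ : v₁ > 0, v₃ > 0, v₁^{q-1} v₃ > c v₂^q}`, for all `α, β ≥ 0` with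
`β + (α+1)/q ≤ 2` the integral
`∫_D v₁^{p₁} |v₂/v₁|^α |v₃/v₁|^β e^{-v₁²/2} e^{-A v₃} dv` is finite. -/
theorem integrable_on_limit_domain
    (p₁ : ℝ) (hp₁ : 0 < p₁) (q : ℕ) (hq : 2 ≤ q) (hq_even : Even q)
    (c A : ℝ) (hc : 0 < c) (hA : 0 < A)
    (α β : ℝ) (hα : 0 ≤ α) (hβ : 0 ≤ β) (hαβ : β + (α + 1) / q ≤ 2) :
    IntegrableOn
      (fun v : Fin 3 → ℝ =>
        v 0 ^ p₁ * |v 1 / v 0| ^ α * |v 2 / v 0| ^ β *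
          Real.exp (-(v 0) ^ 2 / 2) * Real.exp (-A * v 2))
      {v : Fin 3 → ℝ | 0 < v 0 ∧ 0 < v 2 ∧ c * v 1 ^ q < v 0 ^ (q - 1) * v 2}
      volume := by
  have hD : MeasurableSet
      {v : Fin 3 → ℝ | 0 < v 0 ∧ 0 < v 2 ∧ c * v 1 ^ q < v 0 ^ (q - 1) * v 2} := by
    simp only [Set.setOf_and]
    exact ((measurableSet_lt measurable_const (measurable_pi_apply 0)).inter
      ((measurableSet_lt measurable_const (measurable_pi_apply 2)).inter
        (measurableSet_lt (by fun_prop) (by fun_prop))))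
  rw [← integrable_indicator_iff hD]
  set E : (Fin 3 → ℝ) ≃ᵐ ℝ × ℝ × ℝ :=
    (MeasurableEquiv.piFinSuccAbove (fun _ => ℝ) 1).trans
      ((MeasurableEquiv.refl ℝ).prodCongr MeasurableEquiv.finTwoArrow) with hE_def
  have hEv : ∀ v : Fin 3 → ℝ, E v = (v 1, v 0, v 2) := by
    intro v
    simp [hE_def, MeasurableEquiv.trans, MeasurableEquiv.prodCongr,
      MeasurableEquiv.piFinSuccAbove_apply, MeasurableEquiv.finTwoArrow_apply, Fin.succAbove]
    constructor <;> rfl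
  have hEmp : MeasurePreserving E volume volume := by
    have h1 := volume_preserving_piFinSuccAbove (fun _ : Fin 3 => ℝ) 1
    have h2 : MeasurePreserving
        (⇑((MeasurableEquiv.refl ℝ).prodCongr (MeasurableEquiv.finTwoArrow (α := ℝ))))
        volume volume :=
      (MeasurePreserving.id volume).prod (volume_preserving_finTwoArrow ℝ)
    exact h2.comp h1
  have key := aux_integrable_G p₁ hp₁ q hq hq_even c A hc hA α β hα hβ hαβ
  have hcomp := (hEmp.integrable_comp_emb E.measurableEmbedding).2 key
  have hfun : Set.indicator
      {v : Fin 3 → ℝ | 0 < v 0 ∧ 0 < v 2 ∧ c * v 1 ^ q < v 0 ^ (q - 1) * v 2}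
      (fun v : Fin 3 → ℝ =>
        v 0 ^ p₁ * |v 1 / v 0| ^ α * |v 2 / v 0| ^ β *
          Real.exp (-(v 0) ^ 2 / 2) * Real.exp (-A * v 2)) =
      (Set.indicator
        {p : ℝ × ℝ × ℝ | 0 < p.2.1 ∧ 0 < p.2.2 ∧ c * p.1 ^ q < p.2.1 ^ (q - 1) * p.2.2}
        (fun p : ℝ × ℝ × ℝ =>
          p.2.1 ^ p₁ * |p.1 / p.2.1| ^ α * |p.2.2 / p.2.1| ^ β *
            Real.exp (-(p.2.1) ^ 2 / 2) * Real.exp (-A * p.2.2))) ∘ ⇑E := by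
    funext v
    rw [Function.comp_apply, hEv v]
    by_cases hv : v ∈ {v : Fin 3 → ℝ | 0 < v 0 ∧ 0 < v 2 ∧ c * v 1 ^ q < v 0 ^ (q - 1) * v 2}
    · rw [Set.indicator_of_mem hv, Set.indicator_of_mem
        (show (v 1, v 0, v 2) ∈
          {p : ℝ × ℝ × ℝ | 0 < p.2.1 ∧ 0 < p.2.2 ∧ c * p.1 ^ q < p.2.1 ^ (q - 1) * p.2.2}
          from hv)]
    · rw [Set.indicator_of_notMem hv, Set.indicator_of_notMem
        (show (v 1, v 0, v 2) ∉
          {p : ℝ × ℝ × ℝ | 0 < p.2.1 ∧ 0 < p.2.2 ∧ c * p.1 ^ q < p.2.1 ^ (q - 1) * p.2.2}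
          from hv)]
  rw [hfun]
  exact hcomp
end

section
/- Let p₁ > 0, M > 0, η > 0, and a ∈ ℝ^d nonzero. Then ∫_{ℝ^d} |z|^{p₁} e^{-η√t |a| |z|} dz = O(t^{-(p₁+d)/2}) as t → ∞; in particular, for any measurable u with |u(z)| ≤ M|z|^{p₁}, the integral ∫_{{z ∈ C : z_d > η|z|}} u(z) e^{-|z|²/2} e^{-√t |a| z_d} dz over a cone C ⊆ ℝ^d is o(t^{-d/2}) as t → ∞. -/
open Real MeasureTheory Filter Topology Asymptotics

lemma aux_pointwise {p b : ℝ} (hp : 0 ≤ p) (hb : 0 < b) (m : ℕ) :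
    ∀ r : ℝ, 0 ≤ r → r ^ p * Real.exp (-(b * r)) ≤
      ((⌈p⌉₊ + m).factorial * Real.exp b / b ^ (⌈p⌉₊ + m)) * ((1 + r) ^ (-(m : ℝ))) := by
  intro r hr
  set N := ⌈p⌉₊ + m with hN
  have h1r : (1 : ℝ) ≤ 1 + r := by linarith
  have h1rpos : (0 : ℝ) < 1 + r := by linarith
  have hrp : r ^ p ≤ (1 + r) ^ (⌈p⌉₊ : ℕ) := by
    calc r ^ p ≤ (1 + r) ^ p := by
          exact Real.rpow_le_rpow hr (by linarith) hp
      _ ≤ (1 + r) ^ ((⌈p⌉₊ : ℕ) : ℝ) :=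
          Real.rpow_le_rpow_of_exponent_le h1r (Nat.le_ceil p)
      _ = (1 + r) ^ (⌈p⌉₊ : ℕ) := Real.rpow_natCast _ _
  have hkey : (1 + r) ^ N ≤ N.factorial * Real.exp b / b ^ N * Real.exp (b * r) := by
    have := Real.pow_div_factorial_le_exp (x := b * (1 + r)) (by positivity) N
    have h2 : (b * (1 + r)) ^ N ≤ N.factorial * Real.exp (b * (1 + r)) := by
      rw [div_le_iff₀ (by positivity)] at this
      linarith [this]
    rw [mul_pow] at h2
    have hbN : (0:ℝ) < b ^ N := by positivity
    rw [mul_add, mul_one, Real.exp_add] at h2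
    rw [div_mul_eq_mul_div, le_div_iff₀ hbN]
    calc (1 + r) ^ N * b ^ N = b ^ N * (1 + r) ^ N := by ring
      _ ≤ N.factorial * (Real.exp b * Real.exp (b * r)) := h2
      _ = N.factorial * Real.exp b * Real.exp (b * r) := by ring
  have hmain : r ^ p * Real.exp (-(b * r)) * (1 + r) ^ m ≤ N.factorial * Real.exp b / b ^ N := by
    calc r ^ p * Real.exp (-(b * r)) * (1 + r) ^ m
        ≤ (1 + r) ^ (⌈p⌉₊ : ℕ) * Real.exp (-(b * r)) * (1 + r) ^ m := by
          apply mul_le_mul_of_nonneg_right (mul_le_mul_of_nonneg_right hrp (Real.exp_pos _).le)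
          positivity
      _ = (1 + r) ^ N * Real.exp (-(b * r)) := by rw [hN, pow_add]; ring
      _ ≤ (N.factorial * Real.exp b / b ^ N * Real.exp (b * r)) * Real.exp (-(b * r)) := by
          apply mul_le_mul_of_nonneg_right hkey (Real.exp_pos _).le
      _ = N.factorial * Real.exp b / b ^ N := by
          rw [mul_assoc, ← Real.exp_add]; simp
  have hrw : ((1 + r) ^ (-(m : ℝ))) = ((1 + r) ^ m)⁻¹ := by
    rw [Real.rpow_neg h1rpos.le, Real.rpow_natCast]
  rw [hrw, ← div_eq_mul_inv, le_div_iff₀ (by positivity : (0:ℝ) < (1 + r) ^ m)]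
  exact hmain

lemma aux_integrable (d : ℕ) {p b : ℝ} (hp : 0 ≤ p) (hb : 0 < b) :
    Integrable (fun z : EuclideanSpace ℝ (Fin d) => ‖z‖ ^ p * Real.exp (-(b * ‖z‖))) := by
  have hint : Integrable (fun z : EuclideanSpace ℝ (Fin d) =>
      ((⌈p⌉₊ + (d+1)).factorial * Real.exp b / b ^ (⌈p⌉₊ + (d+1))) *
        ((1 + ‖z‖) ^ (-((d:ℝ)+1)))) := by
    apply Integrable.const_mul
    exact integrable_one_add_norm (by simp [finrank_euclideanSpace_fin])
  apply hint.mono'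
  · apply Measurable.aestronglyMeasurable
    fun_prop
  · filter_upwards with z
    rw [Real.norm_eq_abs, abs_of_nonneg (by positivity)]
    have := aux_pointwise hp hb (d+1) ‖z‖ (norm_nonneg z)
    simpa using this

lemma aux_scaling (d : ℕ) (p c : ℝ) {s : ℝ} (hs : 0 < s) :
    ∫ z : EuclideanSpace ℝ (Fin d), ‖z‖ ^ p * Real.exp (-(c * s * ‖z‖)) =
      (s ^ (p + d))⁻¹ * ∫ z : EuclideanSpace ℝ (Fin d), ‖z‖ ^ p * Real.exp (-(c * ‖z‖)) := by
  set g : EuclideanSpace ℝ (Fin d) → ℝ := fun z => ‖z‖ ^ p * Real.exp (-(c * ‖z‖)) with hg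
  have h := MeasureTheory.Measure.integral_comp_smul_of_nonneg (volume) g s (hR := hs.le)
  rw [finrank_euclideanSpace_fin] at h
  have h2 : ∀ z : EuclideanSpace ℝ (Fin d),
      g (s • z) = s ^ p * (‖z‖ ^ p * Real.exp (-(c * s * ‖z‖))) := by
    intro z
    simp only [hg, norm_smul, Real.norm_eq_abs, abs_of_pos hs]
    rw [Real.mul_rpow hs.le (norm_nonneg z)]
    ring_nf
  simp only [h2] at h
  rw [MeasureTheory.integral_const_mul, smul_eq_mul] at h
  have hsp : (0:ℝ) < s ^ p := Real.rpow_pos_of_pos hs p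
  have : (s ^ (p + (d:ℝ))) = s ^ p * s ^ (d:ℕ) := by
    rw [Real.rpow_add hs, Real.rpow_natCast]
  rw [this, mul_inv]
  field_simp at h ⊢
  linarith [h]

/-- For `p₁ > 0`, `η > 0` and `a ≠ 0`,
`∫_{ℝ^d} |z|^{p₁} e^{-η√t |a| |z|} dz = O(t^{-(p₁+d)/2})` as `t → ∞`; in particular,
for any measurable `u` with `|u(z)| ≤ M|z|^{p₁}` and any measurable cone `C ⊆ ℝ^d`,
`∫_{{z ∈ C : z_d > η|z|}} u(z) e^{-|z|²/2} e^{-√t |a| z_d} dz = o(t^{-d/2})`. -/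
theorem spherical_cap_contribution
    (d : ℕ) (hd : 0 < d) (p₁ M η : ℝ) (hp₁ : 0 < p₁) (hM : 0 < M) (hη : 0 < η)
    (a : EuclideanSpace ℝ (Fin d)) (ha : a ≠ 0)
    (C : Set (EuclideanSpace ℝ (Fin d))) (hC_meas : MeasurableSet C)
    (hC_cone : ∀ (l : ℝ), 0 < l → ∀ y ∈ C, l • y ∈ C)
    (u : EuclideanSpace ℝ (Fin d) → ℝ) (hu_meas : Measurable u)
    (hu_bound : ∀ z, |u z| ≤ M * ‖z‖ ^ p₁) :
    ((fun t : ℝ =>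
        ∫ z : EuclideanSpace ℝ (Fin d),
          ‖z‖ ^ p₁ * Real.exp (-η * Real.sqrt t * ‖a‖ * ‖z‖)) =O[atTop]
      fun t : ℝ => t ^ (-(p₁ + d) / 2)) ∧
    ((fun t : ℝ =>
        ∫ z in {z ∈ C | η * ‖z‖ < z ⟨d - 1, by omega⟩},
          u z * Real.exp (-‖z‖ ^ 2 / 2) *
            Real.exp (-Real.sqrt t * ‖a‖ * z ⟨d - 1, by omega⟩)) =o[atTop]
      fun t : ℝ => t ^ (-(d : ℝ) / 2)) := by
  have hna : (0:ℝ) < ‖a‖ := norm_pos_iff.mpr ha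
  set c : ℝ := η * ‖a‖ with hc_eq
  have hc : 0 < c := mul_pos hη hna
  set K : ℝ := ∫ z : EuclideanSpace ℝ (Fin d), ‖z‖ ^ p₁ * Real.exp (-(c * ‖z‖)) with hK
  -- the eventual exact formula for the first integral
  have hI : ∀ t : ℝ, 1 ≤ t →
      (∫ z : EuclideanSpace ℝ (Fin d), ‖z‖ ^ p₁ * Real.exp (-η * Real.sqrt t * ‖a‖ * ‖z‖))
        = K * t ^ (-(p₁ + d) / 2) := by
    intro t ht
    have ht0 : (0:ℝ) < t := by linarith
    have hst : 0 < Real.sqrt t := Real.sqrt_pos.mpr ht0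
    have e1 : ∀ z : EuclideanSpace ℝ (Fin d),
        ‖z‖ ^ p₁ * Real.exp (-η * Real.sqrt t * ‖a‖ * ‖z‖)
          = ‖z‖ ^ p₁ * Real.exp (-(c * Real.sqrt t * ‖z‖)) := by
      intro z
      rw [show -η * Real.sqrt t * ‖a‖ * ‖z‖ = -(c * Real.sqrt t * ‖z‖) by
        rw [hc_eq]; ring]
    rw [integral_congr_ae (ae_of_all _ e1), aux_scaling d p₁ c hst, ← hK]
    have h3 : Real.sqrt t ^ (p₁ + (d:ℝ)) = t ^ ((p₁ + d) / 2) := by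
      rw [Real.sqrt_eq_rpow, ← Real.rpow_mul ht0.le]
      congr 1; ring
    rw [h3, show (-(p₁+(d:ℝ))/2) = -((p₁+(d:ℝ))/2) by ring, Real.rpow_neg ht0.le, mul_comm]
  -- Part 1
  have hO1 : (fun t : ℝ =>
      ∫ z : EuclideanSpace ℝ (Fin d),
        ‖z‖ ^ p₁ * Real.exp (-η * Real.sqrt t * ‖a‖ * ‖z‖)) =O[atTop]
      fun t : ℝ => t ^ (-(p₁ + d) / 2) := by
    apply Asymptotics.IsBigO.of_bound ‖K‖
    filter_upwards [eventually_ge_atTop 1] with t ht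
    rw [hI t ht, norm_mul]
  refine ⟨hO1, ?_⟩
  -- rpow comparison
  have hlo : (fun t : ℝ => t ^ (-(p₁ + d) / 2)) =o[atTop]
      fun t : ℝ => t ^ (-(d:ℝ) / 2) := by
    have hgf : ∀ᶠ t : ℝ in atTop, t ^ (-(d:ℝ) / 2) = 0 → t ^ (-(p₁ + (d:ℝ)) / 2) = 0 := by
      filter_upwards [eventually_gt_atTop 0] with t ht h
      exact absurd h (Real.rpow_pos_of_pos ht _).ne'
    rw [Asymptotics.isLittleO_iff_tendsto' hgf]
    have hev : (fun t : ℝ => t ^ (-(p₁/2))) =ᶠ[atTop]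
        fun t : ℝ => t ^ (-(p₁ + (d:ℝ)) / 2) / t ^ (-(d:ℝ)/2) := by
      filter_upwards [eventually_gt_atTop 0] with t ht
      rw [← Real.rpow_sub ht]; congr 1; ring
    exact (tendsto_rpow_neg_atTop (by positivity)).congr' hev
  -- Part 2: the set integral is bounded by M times the first integral
  set S : Set (EuclideanSpace ℝ (Fin d)) :=
    {z ∈ C | η * ‖z‖ < z ⟨d - 1, by omega⟩} with hS_eq
  have hproj : Measurable fun z : EuclideanSpace ℝ (Fin d) => z ⟨d - 1, by omega⟩ :=
    (EuclideanSpace.proj (⟨d - 1, by omega⟩ : Fin d)).continuous.measurable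
  have hS : MeasurableSet S :=
    hC_meas.inter (measurableSet_lt (measurable_norm.const_mul η) hproj)
  have hbig : (fun t : ℝ =>
      ∫ z in S, u z * Real.exp (-‖z‖ ^ 2 / 2) *
          Real.exp (-Real.sqrt t * ‖a‖ * z ⟨d - 1, by omega⟩)) =O[atTop]
      (fun t : ℝ =>
        ∫ z : EuclideanSpace ℝ (Fin d),
          ‖z‖ ^ p₁ * Real.exp (-η * Real.sqrt t * ‖a‖ * ‖z‖)) := by
    apply Asymptotics.IsBigO.of_bound M
    filter_upwards [eventually_ge_atTop 1] with t ht
    have ht0 : (0:ℝ) < t := by linarith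
    have hst : 0 < Real.sqrt t := Real.sqrt_pos.mpr ht0
    set b : ℝ := c * Real.sqrt t with hb_eq
    have hb : 0 < b := mul_pos hc hst
    set g : EuclideanSpace ℝ (Fin d) → ℝ :=
      fun z => ‖z‖ ^ p₁ * Real.exp (-(b * ‖z‖)) with hg_eq
    have hg_int : Integrable g := aux_integrable d hp₁.le hb
    have hgM : Integrable fun z => M * g z := hg_int.const_mul M
    set F : EuclideanSpace ℝ (Fin d) → ℝ :=
      fun z => u z * Real.exp (-‖z‖ ^ 2 / 2) *
        Real.exp (-Real.sqrt t * ‖a‖ * z ⟨d - 1, by omega⟩) with hF_eq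
    have hF_meas : Measurable F := by
      apply ((hu_meas.mul (by fun_prop)).mul _)
      exact (Real.measurable_exp.comp ((hproj.const_mul (-Real.sqrt t * ‖a‖)).mono le_rfl le_rfl)).comp measurable_id |>.mono le_rfl le_rfl
    have hFb : ∀ z ∈ S, ‖F z‖ ≤ M * g z := by
      intro z hz
      obtain ⟨hz1, hz2⟩ := hz
      have hzn : (0:ℝ) ≤ ‖z‖ := norm_nonneg z
      have hexp1 : Real.exp (-‖z‖ ^ 2 / 2) ≤ 1 :=
        Real.exp_le_one_iff.mpr (by nlinarith [sq_nonneg ‖z‖])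
      have hexp2 : Real.exp (-Real.sqrt t * ‖a‖ * z ⟨d - 1, by omega⟩) ≤
          Real.exp (-(b * ‖z‖)) := by
        apply Real.exp_le_exp.mpr
        have h1 : η * ‖z‖ ≤ z ⟨d - 1, by omega⟩ := hz2.le
        have h2 := mul_le_mul_of_nonneg_left h1 (by positivity : (0:ℝ) ≤ Real.sqrt t * ‖a‖)
        rw [hb_eq, hc_eq]
        nlinarith [h2]
      rw [hF_eq]
      simp only [norm_mul, Real.norm_eq_abs, Real.abs_exp]
      calc |u z| * Real.exp (-‖z‖ ^ 2 / 2) * Real.exp (-Real.sqrt t * ‖a‖ * z ⟨d - 1, by omega⟩)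
          ≤ (M * ‖z‖ ^ p₁) * 1 * Real.exp (-(b * ‖z‖)) := by
            have h0 : (0:ℝ) ≤ |u z| := abs_nonneg _
            have hup := hu_bound z
            gcongr
      _ = M * g z := by rw [hg_eq]; ring
    have hFi : IntegrableOn F S := by
      apply Integrable.mono' hgM.restrict (hF_meas.aestronglyMeasurable.restrict)
      exact (ae_restrict_iff' hS).mpr (ae_of_all _ hFb)
    have hIt_nonneg : (0:ℝ) ≤
        ∫ z : EuclideanSpace ℝ (Fin d), ‖z‖ ^ p₁ * Real.exp (-η * Real.sqrt t * ‖a‖ * ‖z‖) :=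
      integral_nonneg fun z => by positivity
    have e2 : ∀ z : EuclideanSpace ℝ (Fin d),
        ‖z‖ ^ p₁ * Real.exp (-η * Real.sqrt t * ‖a‖ * ‖z‖) = g z := by
      intro z
      simp only [hg_eq]
      rw [show -(b * ‖z‖) = -η * Real.sqrt t * ‖a‖ * ‖z‖ by rw [hb_eq, hc_eq]; ring]
    calc ‖∫ z in S, F z‖ ≤ ∫ z in S, ‖F z‖ := norm_integral_le_integral_norm _
      _ ≤ ∫ z in S, M * g z := by
          apply setIntegral_mono_on hFi.norm hgM.integrableOn hS hFb
      _ ≤ ∫ z, M * g z := setIntegral_le_integral hgM (ae_of_all _ fun z => by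
            rw [hg_eq]; positivity)
      _ = M * ∫ z, g z := MeasureTheory.integral_const_mul _ _
      _ = M * ∫ z : EuclideanSpace ℝ (Fin d),
            ‖z‖ ^ p₁ * Real.exp (-η * Real.sqrt t * ‖a‖ * ‖z‖) := by
          rw [integral_congr_ae (ae_of_all _ e2)]
      _ ≤ M * ‖∫ z : EuclideanSpace ℝ (Fin d),
            ‖z‖ ^ p₁ * Real.exp (-η * Real.sqrt t * ‖a‖ * ‖z‖)‖ := by
          gcongr; exact le_abs_self _
  exact (hbig.trans hO1).trans_isLittleO hlo
end
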